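/- arXiv:1302.3716 — 2 statements merged into one kernel-verified Lean document; each statement's English description precedes it below -/
import Mathlib

section
/- Let k, h ≥ 1 be integers, c_{−k},…,c_h ∈ ℂ with c_h ≠ 0 and c_{−k} ≠ 0, and let n be an integer with 0 ≤ n < h. Then the set C_A = { x ∈ ℂ^{n+1} : |α_k(x)| = |α_{k+1}(x)| = … = |α_{k+n+1}(x)| } is a compact subset of ℂ^{n+1}, where α_1(x),…,α_{h+k}(x) are the roots, counted with multiplicity and ordered by nondecreasing modulus, of Q(t,x) = Σ_{j=−k}^{h} c_j t^{j+k} − Σ_{j=0}^{n} x_j t^{j+k}. -/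
open Polynomial

/-- The symbol `Q(t,x) = t^k (∑_{j=-k}^h c_j t^j - ∑_{j=0}^n x_j t^j)` of a banded Toeplitz
matrix with symbol coefficients `c : ℤ → ℂ` (supported on `[-k,h]`), as a polynomial in `t`
of degree `h + k`. -/
noncomputable def Qsymb (k h n : ℕ) (c : ℤ → ℂ) (x : Fin (n + 1) → ℂ) : Polynomial ℂ :=
  ∑ j ∈ Finset.range (h + k + 1),
    Polynomial.C (c ((j : ℤ) - (k : ℤ)) -
        if hj : k ≤ j ∧ j ≤ k + n then x ⟨j - k, by omega⟩ else 0) *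
      Polynomial.X ^ j

/-- The set `C_A = { x ∈ ℂ^{n+1} : |α_k(x)| = … = |α_{k+n+1}(x)| }`, where
`α_1(x), …, α_{h+k}(x)` are the roots of `Q(t,x)` counted with multiplicity and ordered by
nondecreasing modulus (here listed `0`-based, so positions `k, …, k+n+1` become
`k-1, …, k+n`). -/
noncomputable def CA (k h n : ℕ) (c : ℤ → ℂ) : Set (Fin (n + 1) → ℂ) :=
  {x | ∃ α : Fin (h + k) → ℂ,
    (Qsymb k h n c x).roots = Multiset.map α Finset.univ.val ∧
    (Monotone fun i => ‖α i‖) ∧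
    ∀ j₁ j₂ : Fin (h + k), k - 1 ≤ (j₁ : ℕ) → (j₁ : ℕ) ≤ k + n →
      k - 1 ≤ (j₂ : ℕ) → (j₂ : ℕ) ≤ k + n →
        ‖α j₁‖ = ‖α j₂‖}

/-- The complex modulus as a bundled absolute value (removed from Mathlib). -/
noncomputable def Complex.abs : AbsoluteValue ℂ ℝ :=
  IsAbsoluteValue.toAbsoluteValue (norm : ℂ → ℝ)

lemma Complex.norm_eq_abs (z : ℂ) : ‖z‖ = Complex.abs z := rfl

lemma Complex.continuous_abs : Continuous Complex.abs := continuous_norm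

namespace Stmt8Aux
open Finset NNReal

-- coefficient bound for monic root products
lemma coeff_prod_bound {ι : Type*} (s : Finset ι) (a : ι → ℂ) :
    ∀ t : ℕ, Complex.abs ((∏ i ∈ s, (X - C (a i))).coeff t) ≤ ∏ i ∈ s, (1 + Complex.abs (a i)) := by
  classical
  induction s using Finset.cons_induction with
  | empty => intro t; simp [coeff_one]; split_ifs <;> simp
  | cons i s hi ih =>
    intro t
    have hprod0 : (0:ℝ) ≤ ∏ j ∈ s, (1 + Complex.abs (a j)) :=
      Finset.prod_nonneg fun j _ => by positivity
    rw [Finset.prod_cons, Finset.prod_cons, sub_mul, coeff_sub, coeff_C_mul]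
    refine le_trans (AbsoluteValue.sub_le_add _ _ _) ?_
    have h1 : Complex.abs ((X * ∏ j ∈ s, (X - C (a j))).coeff t) ≤ ∏ j ∈ s, (1 + Complex.abs (a j)) := by
      cases t with
      | zero => simp [mul_coeff_zero]; exact hprod0
      | succ t => rw [coeff_X_mul]; exact ih t
    have h2 : Complex.abs (a i * (∏ j ∈ s, (X - C (a j))).coeff t)
        ≤ Complex.abs (a i) * ∏ j ∈ s, (1 + Complex.abs (a j)) := by
      rw [map_mul]
      exact mul_le_mul_of_nonneg_left (ih t) (Complex.abs.nonneg _)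
    calc _ ≤ ∏ j ∈ s, (1 + Complex.abs (a j)) + Complex.abs (a i) * ∏ j ∈ s, (1 + Complex.abs (a j)) :=
          add_le_add h1 h2
      _ = (1 + Complex.abs (a i)) * ∏ j ∈ s, (1 + Complex.abs (a j)) := by ring

-- continuity of coefficients of monic root products
lemma continuous_coeff_prod {ι : Type*} (s : Finset ι) (t : ℕ) :
    Continuous fun a : ι → ℂ => (∏ i ∈ s, (X - C (a i))).coeff t := by
  classical
  induction s using Finset.cons_induction generalizing t with
  | empty => simpa using continuous_const
  | cons i s hi ih =>
    have heq : (fun a : ι → ℂ => (∏ j ∈ Finset.cons i s hi, (X - C (a j))).coeff t)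
        = fun a => (if t = 0 then 0 else (∏ j ∈ s, (X - C (a j))).coeff (t-1))
            - a i * (∏ j ∈ s, (X - C (a j))).coeff t := by
      funext a
      rw [Finset.prod_cons, sub_mul, coeff_sub, coeff_C_mul]
      congr 1
      cases t with
      | zero => simp [mul_coeff_zero]
      | succ t => simp [coeff_X_mul]
    rw [heq]
    refine Continuous.sub ?_ (Continuous.mul (continuous_apply i) (ih t))
    split_ifs
    · exact continuous_const
    · exact ih (t-1)


/-- If `A` is monic with coefficients bounded by `CA`, `B` is monic, and the top
`B.natDegree + 1` coefficients of `A*B` are bounded by `D`, then the coefficients of `B`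
are bounded. -/
lemma coeff_bound_of_prod (A B : ℂ[X]) (hA : A.Monic) (hB : B.Monic)
    (CAb D : ℝ) (hCA : ∀ p, Complex.abs (A.coeff p) ≤ CAb) (hD0 : 0 ≤ D)
    (hD : ∀ s ≤ B.natDegree,
      Complex.abs ((A*B).coeff (A.natDegree + B.natDegree - s)) ≤ D) :
    ∀ s ≤ B.natDegree, Complex.abs (B.coeff (B.natDegree - s))
      ≤ (D + (A.natDegree + B.natDegree + 1) * CAb + 1) ^ (s+1) := by
  set dA := A.natDegree with hdA
  set m := B.natDegree with hm
  set F : ℝ := D + (dA + m + 1) * CAb + 1 with hF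
  have hCA0 : 0 ≤ CAb := le_trans (Complex.abs.nonneg _) (hCA 0)
  have hF1 : 1 ≤ F := by
    have : 0 ≤ (dA + m + 1 : ℝ) * CAb := by positivity
    simp only [hF]; linarith
  have hF0 : 0 ≤ F := le_trans zero_le_one hF1
  intro s
  induction s using Nat.strong_induction_on with
  | _ s IH =>
    intro hs
    -- key equation via coeff_mul
    have hkey : (A*B).coeff (dA + m - s)
        = ∑ pq ∈ Finset.HasAntidiagonal.antidiagonal (dA + m - s), A.coeff pq.1 * B.coeff pq.2 := by
      rw [coeff_mul]
    have hmem : ((dA, m - s) : ℕ × ℕ) ∈ Finset.HasAntidiagonal.antidiagonal (dA + m - s) := by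
      rw [Finset.HasAntidiagonal.mem_antidiagonal]; omega
    have hsplit : ∑ pq ∈ Finset.HasAntidiagonal.antidiagonal (dA + m - s), A.coeff pq.1 * B.coeff pq.2
        = A.coeff dA * B.coeff (m - s)
          + ∑ pq ∈ (Finset.HasAntidiagonal.antidiagonal (dA + m - s)).erase (dA, m - s),
              A.coeff pq.1 * B.coeff pq.2 := by
      exact (Finset.add_sum_erase _ (fun pq => A.coeff pq.1 * B.coeff pq.2) hmem).symm
    have hAtop : A.coeff dA = 1 := hA.coeff_natDegree
    have hBeq : B.coeff (m - s) = (A*B).coeff (dA + m - s)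
        - ∑ pq ∈ (Finset.HasAntidiagonal.antidiagonal (dA + m - s)).erase (dA, m - s),
            A.coeff pq.1 * B.coeff pq.2 := by
      rw [hkey, hsplit, hAtop, one_mul]; ring
    -- bound each term of the remaining sum
    have hterm : ∀ pq ∈ (Finset.HasAntidiagonal.antidiagonal (dA + m - s)).erase (dA, m - s),
        Complex.abs (A.coeff pq.1 * B.coeff pq.2) ≤ CAb * F ^ s := by
      rintro ⟨p, q⟩ hpq
      dsimp only
      have hne : (p, q) ≠ (dA, m - s) := Finset.ne_of_mem_erase hpq
      have hadd : p + q = dA + m - s := Finset.HasAntidiagonal.mem_antidiagonal.mp (Finset.mem_of_mem_erase hpq)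
      rw [map_mul]
      by_cases hp : p ≤ dA
      · by_cases hq : q ≤ m
        · -- q = m - j with j < s
          have hqge : m - s ≤ q := by omega
          have hqne : q ≠ m - s := by
            intro hcon; apply hne; rw [Prod.mk.injEq]; constructor <;> omega
          set j := m - q with hj
          have hjs : j < s := by omega
          have hq' : q = m - j := by omega
          have hb : Complex.abs (B.coeff (m - j)) ≤ F ^ (j+1) := IH j hjs (by omega)
          have hb' : Complex.abs (B.coeff q) ≤ F ^ s := by
            rw [hq']
            exact le_trans hb (pow_le_pow_right₀ hF1 (by omega))
          exact mul_le_mul (hCA p) hb' (Complex.abs.nonneg _) hCA0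
        · have hz : B.coeff q = 0 := coeff_eq_zero_of_natDegree_lt (by omega)
          rw [hz]; simp; positivity
      · have hz : A.coeff p = 0 := coeff_eq_zero_of_natDegree_lt (by omega)
        rw [hz]; simp; positivity
    have hcard : ((Finset.HasAntidiagonal.antidiagonal (dA + m - s)).erase (dA, m - s)).card ≤ dA + m + 1 := by
      calc _ ≤ (Finset.HasAntidiagonal.antidiagonal (dA + m - s)).card := Finset.card_erase_le
        _ = dA + m - s + 1 := Finset.Nat.card_antidiagonal _
        _ ≤ dA + m + 1 := by omega
    have hsum : Complex.abs (∑ pq ∈ (Finset.HasAntidiagonal.antidiagonal (dA + m - s)).erase (dA, m - s),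
          A.coeff pq.1 * B.coeff pq.2) ≤ (dA + m + 1) * (CAb * F ^ s) := by
      refine le_trans (Complex.abs.sum_le _ _) ?_
      calc (∑ pq ∈ (Finset.HasAntidiagonal.antidiagonal (dA + m - s)).erase (dA, m - s),
              Complex.abs (A.coeff pq.1 * B.coeff pq.2))
          ≤ ∑ _pq ∈ (Finset.HasAntidiagonal.antidiagonal (dA + m - s)).erase (dA, m - s), CAb * F ^ s :=
            Finset.sum_le_sum hterm
        _ = ((Finset.HasAntidiagonal.antidiagonal (dA + m - s)).erase (dA, m - s)).card * (CAb * F ^ s) := by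
            rw [Finset.sum_const, nsmul_eq_mul]
        _ ≤ (dA + m + 1) * (CAb * F ^ s) := by
            have : 0 ≤ CAb * F ^ s := by positivity
            apply mul_le_mul_of_nonneg_right _ this
            exact_mod_cast hcard
    have hFs1 : (1:ℝ) ≤ F ^ s := one_le_pow₀ hF1
    have : Complex.abs (B.coeff (m - s)) ≤ D + (dA + m + 1) * (CAb * F ^ s) := by
      rw [hBeq]
      refine le_trans (AbsoluteValue.sub_le_add _ _ _) (add_le_add (hD s hs) hsum)
    refine le_trans this ?_
    have : F ^ (s + 1) = (D + (dA + m + 1) * CAb + 1) * F ^ s := by rw [pow_succ]; ring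
    rw [this]
    have hFs0 : (0:ℝ) ≤ F ^ s := by positivity
    nlinarith [mul_le_mul_of_nonneg_left hFs1 hD0]

lemma reverse_X_sub_C (a : ℂ) (ha : a ≠ 0) :
    (X - C a).reverse = C (-a) * (X - C a⁻¹) := by
  have hdeg : (X - C a).natDegree = 1 := natDegree_X_sub_C a
  ext n
  rw [coeff_reverse, hdeg]
  match n with
  | 0 =>
    rw [revAt_le (by omega)]
    simp [mul_inv_cancel₀ ha]
  | 1 =>
    rw [revAt_le (by omega)]
    simp
  | (n+2) =>
    rw [revAt_eq_self_of_lt (by omega)]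
    simp [coeff_X, coeff_C]

lemma reverse_prod_X_sub_C {ι : Type*} (s : Finset ι) (a : ι → ℂ) (ha : ∀ i ∈ s, a i ≠ 0) :
    (∏ i ∈ s, (X - C (a i))).reverse
      = C ((-1)^s.card * ∏ i ∈ s, a i) * ∏ i ∈ s, (X - C (a i)⁻¹) := by
  classical
  induction s using Finset.cons_induction with
  | empty =>
    simp only [Finset.prod_empty, Finset.card_empty, pow_zero, one_mul, map_one]
    rw [show (1:ℂ[X]) = C 1 from (map_one C).symm, reverse_C, map_one]
  | cons i s hi ih =>
    rw [Finset.prod_cons, reverse_mul_of_domain,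
      ih (fun j hj => ha j (Finset.mem_cons.mpr (Or.inr hj))),
      reverse_X_sub_C (a i) (ha i (Finset.mem_cons.mpr (Or.inl rfl))),
      Finset.prod_cons, Finset.prod_cons, Finset.card_cons]
    simp only [map_mul, map_pow, map_neg, map_one, pow_succ]
    ring

lemma natDegree_prod_X_sub_C {ι : Type*} (s : Finset ι) (a : ι → ℂ) :
    (∏ i ∈ s, (X - C (a i))).natDegree = s.card := by
  rw [natDegree_prod _ _ (fun i _ => X_sub_C_ne_zero (a i))]
  simp

lemma prod_inv_coeff {ι : Type*} (s : Finset ι) (a : ι → ℂ) (ha : ∀ i ∈ s, a i ≠ 0)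
    (t : ℕ) (ht : t ≤ s.card) :
    (∏ i ∈ s, (X - C (a i)⁻¹)).coeff t
      = ((-1)^s.card * ∏ i ∈ s, a i)⁻¹ * (∏ i ∈ s, (X - C (a i))).coeff (s.card - t) := by
  have hw : ((-1:ℂ)^s.card * ∏ i ∈ s, a i) ≠ 0 := by
    apply mul_ne_zero (pow_ne_zero _ (by norm_num))
    exact Finset.prod_ne_zero_iff.mpr ha
  have h1 : (∏ i ∈ s, (X - C (a i)⁻¹))
      = C ((-1)^s.card * ∏ i ∈ s, a i)⁻¹ * (∏ i ∈ s, (X - C (a i))).reverse := by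
    rw [reverse_prod_X_sub_C s a ha, ← mul_assoc, ← map_mul, inv_mul_cancel₀ hw, map_one, one_mul]
  rw [h1, coeff_C_mul, coeff_reverse, natDegree_prod_X_sub_C, revAt_le ht]


lemma Qsymb_coeff (k h n : ℕ) (c : ℤ → ℂ) (x : Fin (n+1) → ℂ) (j : ℕ) :
    (Qsymb k h n c x).coeff j
      = if j ≤ h + k then
          c ((j : ℤ) - (k : ℤ)) - (if hj : k ≤ j ∧ j ≤ k + n then x ⟨j - k, by omega⟩ else 0)
        else 0 := by
  rw [Qsymb, finset_sum_coeff]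
  simp only [coeff_C_mul, coeff_X_pow, mul_ite, mul_one, mul_zero]
  rw [Finset.sum_ite_eq]
  by_cases hj : j ≤ h + k
  · rw [if_pos (Finset.mem_range.mpr (by omega)), if_pos hj]
  · rw [if_neg (by rw [Finset.mem_range]; omega), if_neg hj]

lemma Qsymb_natDegree (k h n : ℕ) (hn : n < h) (c : ℤ → ℂ) (hch : c (h:ℤ) ≠ 0)
    (x : Fin (n+1) → ℂ) : (Qsymb k h n c x).natDegree = h + k := by
  have hco : (Qsymb k h n c x).coeff (h+k) = c (h:ℤ) := by
    rw [Qsymb_coeff]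
    have h1 : ¬(k ≤ h + k ∧ h + k ≤ k + n) := by omega
    rw [if_pos le_rfl, dif_neg h1, sub_zero]
    congr 1
    push_cast; ring
  have hle : (Qsymb k h n c x).natDegree ≤ h + k := by
    rw [natDegree_le_iff_coeff_eq_zero]
    intro N hN
    rw [Qsymb_coeff, if_neg (by omega)]
  have hge : h + k ≤ (Qsymb k h n c x).natDegree :=
    le_natDegree_of_ne_zero (by rw [hco]; exact hch)
  omega

lemma Qsymb_leadingCoeff (k h n : ℕ) (hn : n < h) (c : ℤ → ℂ) (hch : c (h:ℤ) ≠ 0)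
    (x : Fin (n+1) → ℂ) : (Qsymb k h n c x).leadingCoeff = c (h:ℤ) := by
  rw [leadingCoeff, Qsymb_natDegree k h n hn c hch, Qsymb_coeff]
  have h1 : ¬(k ≤ h + k ∧ h + k ≤ k + n) := by omega
  rw [if_pos le_rfl, dif_neg h1, sub_zero]
  congr 1
  push_cast; ring

lemma card_filter_fin_lt (N m : ℕ) (hm : m ≤ N) :
    (Finset.filter (fun i : Fin N => (i:ℕ) < m) Finset.univ).card = m := by
  have key : (Finset.filter (fun i : Fin N => (i:ℕ) < m) Finset.univ).card
      = (Finset.univ : Finset (Fin m)).card := by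
    refine Finset.card_bij'
      (fun (i : Fin N) (hi : i ∈ Finset.filter (fun i : Fin N => (i:ℕ) < m) Finset.univ) =>
        (⟨(i:ℕ), (Finset.mem_filter.mp hi).2⟩ : Fin m))
      (fun (j : Fin m) _ => (⟨(j:ℕ), lt_of_lt_of_le j.2 hm⟩ : Fin N)) ?_ ?_ ?_ ?_ <;>
      intro a ha <;> simp_all [Finset.mem_filter, Fin.ext_iff]
  rw [key, Finset.card_univ, Fintype.card_fin]

lemma root_bound (B : ℂ[X]) (hB : B.Monic) (K : ℝ) (hK : 0 ≤ K)
    (hcoeff : ∀ t, Complex.abs (B.coeff t) ≤ K) (z : ℂ) (hz : B.eval z = 0) :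
    Complex.abs z ≤ 1 + K := by
  have hBne : B ≠ 0 := hB.ne_zero
  have hlt := Polynomial.IsRoot.norm_lt_cauchyBound hBne hz
  have h1 : B.cauchyBound ≤ Real.toNNReal K + 1 := by
    rw [Polynomial.cauchyBound, hB.leadingCoeff, nnnorm_one, div_one]
    refine add_le_add_left (Finset.sup_le fun b _ => ?_) 1
    rw [← NNReal.coe_le_coe, Real.coe_toNNReal _ hK, coe_nnnorm, Complex.norm_eq_abs]
    exact hcoeff b
  calc Complex.abs z = ((‖z‖₊ : ℝ≥0) : ℝ) := by rw [coe_nnnorm, Complex.norm_eq_abs]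
    _ ≤ ((Real.toNNReal K + 1 : ℝ≥0) : ℝ) := NNReal.coe_le_coe.mpr (le_trans hlt.le h1)
    _ = 1 + K := by rw [NNReal.coe_add, NNReal.coe_one, Real.coe_toNNReal _ hK]; ring


/-- The set of admissible ordered root tuples. -/
def Sset (k h n : ℕ) (c : ℤ → ℂ) : Set (Fin (h + k) → ℂ) :=
  {α | (Monotone fun i => Complex.abs (α i)) ∧
    (∀ j₁ j₂ : Fin (h + k), k - 1 ≤ (j₁ : ℕ) → (j₁ : ℕ) ≤ k + n →
      k - 1 ≤ (j₂ : ℕ) → (j₂ : ℕ) ≤ k + n →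
        Complex.abs (α j₁) = Complex.abs (α j₂)) ∧
    (∀ j : ℕ, j ≤ h + k → ¬(k ≤ j ∧ j ≤ k + n) →
      c (h:ℤ) * (∏ i : Fin (h+k), (X - C (α i))).coeff j = c ((j:ℤ) - (k:ℤ)))}

/-- The map recovering `x` from a root tuple. -/
noncomputable def fmap (k h n : ℕ) (c : ℤ → ℂ) (α : Fin (h + k) → ℂ) : Fin (n + 1) → ℂ :=
  fun i => c ((i:ℕ) : ℤ) - c (h:ℤ) * (∏ j : Fin (h+k), (X - C (α j))).coeff ((i:ℕ) + k)

lemma fmap_continuous (k h n : ℕ) (c : ℤ → ℂ) : Continuous (fmap k h n c) := by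
  apply continuous_pi
  intro i
  exact continuous_const.sub (continuous_const.mul (continuous_coeff_prod _ _))

lemma CA_eq (k h n : ℕ) (hk : 1 ≤ k) (hn : n < h) (c : ℤ → ℂ) (hch : c (h:ℤ) ≠ 0) :
    CA k h n c = fmap k h n c '' Sset k h n c := by
  ext x
  constructor
  · rintro ⟨α, hroots, hmono, hwin⟩
    have hQne : Qsymb k h n c x ≠ 0 := by
      intro h0
      have := Qsymb_leadingCoeff k h n hn c hch x
      rw [h0] at this
      exact hch (by simpa using this.symm)
    have hfact := (IsAlgClosed.splits (Qsymb k h n c x)).eq_prod_roots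
    rw [hroots, Qsymb_leadingCoeff k h n hn c hch x, Multiset.map_map] at hfact
    have hfact' : Qsymb k h n c x = C (c (h:ℤ)) * ∏ i : Fin (h+k), (X - C (α i)) := by
      rw [hfact, Finset.prod_eq_multiset_prod]
      rfl
    refine ⟨α, ⟨hmono, hwin, ?_⟩, ?_⟩
    · intro j hj hjw
      have := Qsymb_coeff k h n c x j
      rw [hfact', coeff_C_mul] at this
      rw [this, if_pos hj, dif_neg hjw, sub_zero]
    · funext i
      have hik : (i:ℕ) + k ≤ h + k := by omega
      have hwini : k ≤ (i:ℕ) + k ∧ (i:ℕ) + k ≤ k + n := by omega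
      have hco := Qsymb_coeff k h n c x ((i:ℕ) + k)
      rw [hfact', coeff_C_mul] at hco
      rw [fmap]
      rw [hco, if_pos hik, dif_pos hwini]
      have h1 : ((((i:ℕ) + k : ℕ)) : ℤ) - (k:ℤ) = ((i:ℕ) : ℤ) := by push_cast; ring
      have h2 : (⟨(i:ℕ) + k - k, by omega⟩ : Fin (n+1)) = i := by
        apply Fin.ext; simp
      simp only [h1, h2]
      ring
  · rintro ⟨α, ⟨hmono, hwin, hcoeff⟩, rfl⟩
    have hpdeg : (∏ i : Fin (h+k), (X - C (α i))).natDegree = h + k := by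
      rw [natDegree_prod_X_sub_C]
      simp
    have hfact' : Qsymb k h n c (fmap k h n c α)
        = C (c (h:ℤ)) * ∏ i : Fin (h+k), (X - C (α i)) := by
      ext j
      rw [Qsymb_coeff, coeff_C_mul]
      by_cases hj : j ≤ h + k
      · rw [if_pos hj]
        by_cases hjw : k ≤ j ∧ j ≤ k + n
        · rw [dif_pos hjw]
          have hval : (fmap k h n c α) ⟨j - k, by omega⟩
              = c ((j:ℤ) - (k:ℤ))
                - c (h:ℤ) * (∏ i : Fin (h+k), (X - C (α i))).coeff j := by
            rw [fmap]
            have h1 : (((j - k : ℕ)) : ℤ) = (j:ℤ) - (k:ℤ) := by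
              push_cast [Nat.cast_sub hjw.1]; ring
            have h2 : (j - k) + k = j := by omega
            simp only [h1, h2]
          rw [hval]; ring
        · rw [dif_neg hjw, sub_zero, hcoeff j hj hjw]
      · rw [if_neg hj]
        have hz : (∏ i : Fin (h+k), (X - C (α i))).coeff j = 0 :=
          coeff_eq_zero_of_natDegree_lt (by rw [hpdeg]; omega)
        rw [hz, mul_zero]
    refine ⟨α, ?_, hmono, hwin⟩
    rw [hfact', roots_C_mul _ hch]
    have : (∏ i : Fin (h+k), (X - C (α i)))
        = ((Finset.univ.val.map α).map fun a => X - C a).prod := by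
      rw [Finset.prod_eq_multiset_prod, Multiset.map_map]
      rfl
    rw [this, roots_multiset_prod_X_sub_C]


lemma Sset_isClosed (k h n : ℕ) (c : ℤ → ℂ) : IsClosed (Sset k h n c) := by
  have habs : ∀ i : Fin (h+k), Continuous fun α : Fin (h+k) → ℂ => Complex.abs (α i) :=
    fun i => Complex.continuous_abs.comp (continuous_apply i)
  have h1 : IsClosed {α : Fin (h+k) → ℂ | Monotone fun i => Complex.abs (α i)} := by
    have : {α : Fin (h+k) → ℂ | Monotone fun i => Complex.abs (α i)}
        = ⋂ (i : Fin (h+k)) (j : Fin (h+k)),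
            {α | i ≤ j → Complex.abs (α i) ≤ Complex.abs (α j)} := by
      ext α
      constructor
      · intro hα
        simp only [Set.mem_iInter]
        intro i j hij
        exact hα hij
      · intro hα i j hij
        exact (Set.mem_iInter.mp (Set.mem_iInter.mp hα i) j) hij
    rw [this]
    refine isClosed_iInter fun i => isClosed_iInter fun j => ?_
    by_cases hij : i ≤ j
    · simp only [hij, forall_true_left]
      exact isClosed_le (habs i) (habs j)
    · simp only [hij, IsEmpty.forall_iff]
      simp
  have h2 : IsClosed {α : Fin (h+k) → ℂ |
      ∀ j₁ j₂ : Fin (h + k), k - 1 ≤ (j₁ : ℕ) → (j₁ : ℕ) ≤ k + n →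
        k - 1 ≤ (j₂ : ℕ) → (j₂ : ℕ) ≤ k + n →
          Complex.abs (α j₁) = Complex.abs (α j₂)} := by
    have : {α : Fin (h+k) → ℂ |
        ∀ j₁ j₂ : Fin (h + k), k - 1 ≤ (j₁ : ℕ) → (j₁ : ℕ) ≤ k + n →
          k - 1 ≤ (j₂ : ℕ) → (j₂ : ℕ) ≤ k + n →
            Complex.abs (α j₁) = Complex.abs (α j₂)}
        = ⋂ (j₁ : Fin (h+k)) (j₂ : Fin (h+k)),
            {α | k - 1 ≤ (j₁ : ℕ) → (j₁ : ℕ) ≤ k + n → k - 1 ≤ (j₂ : ℕ) → (j₂ : ℕ) ≤ k + n →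
              Complex.abs (α j₁) = Complex.abs (α j₂)} := by
      ext α
      simp only [Set.mem_setOf_eq, Set.mem_iInter]
    rw [this]
    refine isClosed_iInter fun j₁ => isClosed_iInter fun j₂ => ?_
    by_cases hc1 : k - 1 ≤ (j₁ : ℕ)
    · by_cases hc2 : (j₁ : ℕ) ≤ k + n
      · by_cases hc3 : k - 1 ≤ (j₂ : ℕ)
        · by_cases hc4 : (j₂ : ℕ) ≤ k + n
          · simp only [hc1, hc2, hc3, hc4, forall_true_left]
            exact isClosed_eq (habs j₁) (habs j₂)
          · simp only [hc4, IsEmpty.forall_iff, forall_const]; simp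
        · simp only [hc3, IsEmpty.forall_iff, forall_const]; simp
      · simp only [hc2, IsEmpty.forall_iff, forall_const]; simp
    · simp only [hc1, IsEmpty.forall_iff]; simp
  have h3 : IsClosed {α : Fin (h+k) → ℂ |
      ∀ j : ℕ, j ≤ h + k → ¬(k ≤ j ∧ j ≤ k + n) →
        c (h:ℤ) * (∏ i : Fin (h+k), (X - C (α i))).coeff j = c ((j:ℤ) - (k:ℤ))} := by
    have : {α : Fin (h+k) → ℂ |
        ∀ j : ℕ, j ≤ h + k → ¬(k ≤ j ∧ j ≤ k + n) →
          c (h:ℤ) * (∏ i : Fin (h+k), (X - C (α i))).coeff j = c ((j:ℤ) - (k:ℤ))}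
        = ⋂ (j : ℕ), {α : Fin (h+k) → ℂ | j ≤ h + k → ¬(k ≤ j ∧ j ≤ k + n) →
            c (h:ℤ) * (∏ i : Fin (h+k), (X - C (α i))).coeff j = c ((j:ℤ) - (k:ℤ))} := by
      ext α
      simp only [Set.mem_setOf_eq, Set.mem_iInter]
    rw [this]
    refine isClosed_iInter fun j => ?_
    by_cases hj1 : j ≤ h + k
    · by_cases hj2 : ¬(k ≤ j ∧ j ≤ k + n)
      · simp only [hj1, hj2, forall_true_left, not_false_eq_true]
        exact isClosed_eq (continuous_const.mul (continuous_coeff_prod _ _)) continuous_const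
      · simp only [hj2, IsEmpty.forall_iff, forall_const]; simp
    · simp only [hj1, IsEmpty.forall_iff]; simp
  simp only [Sset, Set.setOf_and]
  exact h1.inter (h2.inter h3)


set_option maxHeartbeats 1600000 in
lemma Sset_bounded (k h n : ℕ) (hk : 1 ≤ k) (hh : 1 ≤ h) (hn : n < h) (c : ℤ → ℂ)
    (hch : c (h:ℤ) ≠ 0) (hck : c (-(k:ℤ)) ≠ 0) :
    ∃ M : ℝ, ∀ α ∈ Sset k h n c, ∀ i, Complex.abs (α i) ≤ M := by
  classical
  set Dc := ∑ j ∈ Finset.range (h+k+1), Complex.abs (c ((j:ℤ) - (k:ℤ))) with hDc_def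
  have hDc0 : 0 ≤ Dc := Finset.sum_nonneg fun i _ => Complex.abs.nonneg _
  have hDc : ∀ j : ℕ, j ≤ h + k → Complex.abs (c ((j:ℤ) - (k:ℤ))) ≤ Dc := fun j hj =>
    Finset.single_le_sum (f := fun j : ℕ => Complex.abs (c ((j:ℤ) - (k:ℤ))))
      (fun i _ => Complex.abs.nonneg _) (Finset.mem_range.mpr (by omega))
  have hch' : 0 < Complex.abs (c (h:ℤ)) := AbsoluteValue.pos _ hch
  have hck' : 0 < Complex.abs (c (-(k:ℤ))) := AbsoluteValue.pos _ hck
  set D1 := Dc / Complex.abs (c (h:ℤ)) with hD1_def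
  set D2 := Dc / Complex.abs (c (-(k:ℤ))) with hD2_def
  have hD1_0 : 0 ≤ D1 := div_nonneg hDc0 hch'.le
  have hD2_0 : 0 ≤ D2 := div_nonneg hDc0 hck'.le
  set P := Complex.abs (c (-(k:ℤ))) / Complex.abs (c (h:ℤ)) with hP_def
  have hP0 : 0 < P := div_pos hck' hch'
  set F2' : ℝ := D2 + (h+k+1) * 2^(h+k) + 1 with hF2'_def
  have hF2'1 : 1 ≤ F2' := by
    have : (0:ℝ) ≤ (h+k+1 : ℝ) * 2^(h+k) := by positivity
    simp only [hF2'_def]; push_cast; linarith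
  have hF2'k : (0:ℝ) < F2'^k := pow_pos (lt_of_lt_of_le one_pos hF2'1) k
  set Rmax := max 1 (P * F2'^k) with hRmax_def
  have hRmax1 : (1:ℝ) ≤ Rmax := le_max_left _ _
  have hRmax0 : (0:ℝ) ≤ Rmax := by linarith
  set CA1 : ℝ := (1+Rmax)^(h+k) with hCA1_def
  have hCA1_1 : (1:ℝ) ≤ CA1 := one_le_pow₀ (by linarith)
  set F1 : ℝ := D1 + (h+k+1)*CA1 + 1 with hF1_def
  have hF1_1 : 1 ≤ F1 := by
    have h0 : (0:ℝ) ≤ (h+k+1:ℝ) * CA1 := mul_nonneg (by positivity) (by linarith)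
    simp only [hF1_def]; push_cast; linarith
  have hF1hk0 : (0:ℝ) ≤ F1^(h+k) := pow_nonneg (by linarith) _
  refine ⟨Rmax + (1 + F1^(h+k)), ?_⟩
  rintro α ⟨hmono, hwin, hcoeff⟩ i₀
  set p := ∏ i : Fin (h+k), (X - C (α i)) with hp_def
  have hcard_univ : (Finset.univ : Finset (Fin (h+k))).card = h+k := by simp
  have hpdeg : p.natDegree = h + k := by
    rw [hp_def, natDegree_prod_X_sub_C, hcard_univ]
  have hpout : ∀ j : ℕ, j ≤ h+k → ¬(k ≤ j ∧ j ≤ k+n) →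
      p.coeff j = c ((j:ℤ)-(k:ℤ)) / c (h:ℤ) := by
    intro j hj hjw
    rw [eq_div_iff hch, mul_comm]
    exact hcoeff j hj hjw
  have hp0 : p.coeff 0 = c (-(k:ℤ)) / c (h:ℤ) := by
    have h0 := hpout 0 (by omega) (by omega)
    rw [h0]
    norm_num
  have hpzero_ne : p.coeff 0 ≠ 0 := by rw [hp0]; exact div_ne_zero hck hch
  have hcoeff0 : p.coeff 0 = ∏ i : Fin (h+k), (-(α i)) := by
    rw [hp_def, coeff_zero_eq_eval_zero, eval_prod]
    simp
  have hα0 : ∀ i, α i ≠ 0 := by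
    intro i hi
    apply hpzero_ne
    rw [hcoeff0]
    exact Finset.prod_eq_zero (Finset.mem_univ i) (by simp [hi])
  have habsP : (∏ i : Fin (h+k), Complex.abs (α i)) = P := by
    have h1 : Complex.abs (p.coeff 0) = P := by rw [hp0, map_div₀]
    rw [← h1, hcoeff0, map_prod]
    congr 1
    funext i
    rw [map_neg_eq_map]
  set kidx : Fin (h+k) := ⟨k-1, by omega⟩ with hkidx_def
  have hkidxv : (kidx : ℕ) = k - 1 := rfl
  set r := Complex.abs (α kidx) with hr_def
  have hr0 : 0 < r := AbsoluteValue.pos _ (hα0 _)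
  set k2idx : Fin (h+k) := ⟨k+n, by omega⟩ with hk2idx_def
  have hk2idxv : (k2idx : ℕ) = k + n := rfl
  have hwin' : r = Complex.abs (α k2idx) :=
    hwin kidx k2idx (by rw [hkidxv]) (by rw [hkidxv]; omega) (by rw [hk2idxv]; omega)
      (by rw [hk2idxv])
  have hbelow : ∀ i : Fin (h+k), (i:ℕ) ≤ k+n → Complex.abs (α i) ≤ r := by
    intro i hi
    by_cases hge : k - 1 ≤ (i:ℕ)
    · exact (hwin i kidx hge hi (by rw [hkidxv]) (by rw [hkidxv]; omega)).le
    · exact hmono (show i ≤ kidx by rw [Fin.le_def, hkidxv]; omega)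
  have habove : ∀ i : Fin (h+k), k - 1 ≤ (i:ℕ) → r ≤ Complex.abs (α i) := by
    intro i hi
    by_cases hle : (i:ℕ) ≤ k+n
    · exact (hwin i kidx hi hle (by rw [hkidxv]) (by rw [hkidxv]; omega)).ge
    · rw [hwin']
      exact hmono (show k2idx ≤ i by rw [Fin.le_def, hk2idxv]; omega)
  -- STEP 1 : r ≤ Rmax
  have hrR : r ≤ Rmax := by
    rcases le_or_gt r 1 with hr1 | hr1
    · exact le_trans hr1 hRmax1
    have hq : ∀ t : ℕ, t ≤ h+k →
        Complex.abs ((∏ i : Fin (h+k), (X - C ((α i)⁻¹))).coeff t)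
          = Complex.abs (p.coeff (h+k-t)) / P := by
      intro t ht
      rw [show (∏ i : Fin (h+k), (X - C ((α i)⁻¹)))
            = ∏ i ∈ Finset.univ, (X - C ((α i)⁻¹)) from rfl]
      rw [prod_inv_coeff Finset.univ α (fun i _ => hα0 i) t (by rw [hcard_univ]; exact ht)]
      rw [hcard_univ, map_mul, map_inv₀, map_mul, map_pow, map_neg_eq_map, map_one, one_pow,
        one_mul, map_prod, habsP]
      rw [← hp_def, div_eq_inv_mul]
    set sB := Finset.filter (fun i : Fin (h+k) => (i:ℕ) < k - 1) Finset.univ with hsB_def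
    set sA := Finset.filter (fun i : Fin (h+k) => ¬((i:ℕ) < k - 1)) Finset.univ with hsA_def
    set B2 := ∏ i ∈ sB, (X - C ((α i)⁻¹)) with hB2_def
    set A2 := ∏ i ∈ sA, (X - C ((α i)⁻¹)) with hA2_def
    have hsplit : B2 * A2 = ∏ i : Fin (h+k), (X - C ((α i)⁻¹)) :=
      Finset.prod_filter_mul_prod_filter_not Finset.univ _ _
    have hcardB : sB.card = k - 1 := card_filter_fin_lt _ _ (by omega)
    have hcardA : sA.card = h + 1 := by
      have h0 := Finset.card_filter_add_card_filter_not
        (s := (Finset.univ : Finset (Fin (h+k)))) (p := fun i : Fin (h+k) => (i:ℕ) < k-1)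
      rw [hcard_univ, ← hsB_def, ← hsA_def] at h0
      rw [hcardB] at h0
      omega
    have hA2monic : A2.Monic := monic_prod_of_monic _ _ fun i _ => monic_X_sub_C _
    have hB2monic : B2.Monic := monic_prod_of_monic _ _ fun i _ => monic_X_sub_C _
    have hA2deg : A2.natDegree = h+1 := by rw [hA2_def, natDegree_prod_X_sub_C, hcardA]
    have hB2deg : B2.natDegree = k-1 := by rw [hB2_def, natDegree_prod_X_sub_C, hcardB]
    have hA2coeff : ∀ t, Complex.abs (A2.coeff t) ≤ 2^(h+k) := by
      intro t
      refine le_trans (coeff_prod_bound sA _ t) ?_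
      calc ∏ i ∈ sA, (1 + Complex.abs ((α i)⁻¹)) ≤ ∏ _i ∈ sA, (2:ℝ) := by
            refine Finset.prod_le_prod (fun i _ => by positivity) ?_
            intro i hi
            have hge : k - 1 ≤ (i:ℕ) := by
              have := (Finset.mem_filter.mp hi).2
              omega
            have h1 : 1 ≤ Complex.abs (α i) := le_trans hr1.le (habove i hge)
            have h2 : Complex.abs ((α i)⁻¹) ≤ 1 := by
              rw [map_inv₀]
              exact inv_le_one_of_one_le₀ h1
            linarith
        _ = 2^sA.card := by rw [Finset.prod_const]
        _ ≤ 2^(h+k) := by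
            apply pow_le_pow_right₀ one_le_two
            omega
    have hD2' : ∀ s ≤ B2.natDegree,
        Complex.abs ((A2*B2).coeff (A2.natDegree + B2.natDegree - s)) ≤ D2 := by
      intro s hs
      rw [hB2deg] at hs
      have hidx : A2.natDegree + B2.natDegree - s = h + k - s := by
        rw [hA2deg, hB2deg]; omega
      rw [hidx, mul_comm, hsplit, hq (h+k-s) (by omega), show h + k - (h+k-s) = s by omega,
        hpout s (by omega) (by omega), map_div₀, div_div,
        mul_div_cancel₀ _ (ne_of_gt hch')]
      rw [hD2_def]
      gcongr
      exact hDc s (by omega)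
    have hB2bound := coeff_bound_of_prod A2 B2 hA2monic hB2monic (2^(h+k)) D2 hA2coeff hD2_0
      hD2' (k-1) (by rw [hB2deg])
    rw [hB2deg, Nat.sub_self] at hB2bound
    have hFeq : D2 + ((A2.natDegree:ℝ) + ((k-1:ℕ):ℝ) + 1) * 2^(h+k) + 1 = F2' := by
      rw [hA2deg, hF2'_def]
      push_cast [Nat.cast_sub hk]
      ring
    rw [hFeq] at hB2bound
    have hexp : k - 1 + 1 = k := by omega
    rw [hexp] at hB2bound
    have hB2c0eq : Complex.abs (B2.coeff 0) = ∏ i ∈ sB, (Complex.abs (α i))⁻¹ := by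
      rw [hB2_def, coeff_zero_eq_eval_zero, eval_prod, map_prod]
      congr 1
      funext i
      rw [eval_sub, eval_X, eval_C, zero_sub, map_neg_eq_map, map_inv₀]
    have hprodB_pos : 0 < ∏ i ∈ sB, Complex.abs (α i) :=
      Finset.prod_pos fun i _ => AbsoluteValue.pos _ (hα0 i)
    have hinv : (∏ i ∈ sB, Complex.abs (α i))⁻¹ ≤ F2'^k := by
      rw [← Finset.prod_inv_distrib, ← hB2c0eq]
      exact hB2bound
    have hprod_sB : (F2'^k)⁻¹ ≤ ∏ i ∈ sB, Complex.abs (α i) := by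
      have h1 : (1:ℝ) ≤ (∏ i ∈ sB, Complex.abs (α i)) * F2'^k := by
        calc (1:ℝ) = (∏ i ∈ sB, Complex.abs (α i)) * (∏ i ∈ sB, Complex.abs (α i))⁻¹ := by
              rw [mul_inv_cancel₀ (ne_of_gt hprodB_pos)]
          _ ≤ (∏ i ∈ sB, Complex.abs (α i)) * F2'^k :=
              mul_le_mul_of_nonneg_left hinv hprodB_pos.le
      have h2 : (1:ℝ) ≤ F2'^k * ∏ i ∈ sB, Complex.abs (α i) :=
        h1.trans_eq (mul_comm _ _)
      rw [inv_le_iff_one_le_mul₀ hF2'k]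
      linarith [h1, h2]
    have hprod_sA : r^(h+1) ≤ ∏ i ∈ sA, Complex.abs (α i) := by
      calc r^(h+1) = ∏ _i ∈ sA, r := by rw [Finset.prod_const, hcardA]
        _ ≤ ∏ i ∈ sA, Complex.abs (α i) := by
            refine Finset.prod_le_prod (fun _ _ => hr0.le) ?_
            intro i hi
            have := (Finset.mem_filter.mp hi).2
            exact habove i (by omega)
    have hPsplit : (∏ i ∈ sB, Complex.abs (α i)) * (∏ i ∈ sA, Complex.abs (α i)) = P := by
      rw [Finset.prod_filter_mul_prod_filter_not Finset.univ _ _, habsP]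
    have hmain : (F2'^k)⁻¹ * r^(h+1) ≤ P := by
      rw [← hPsplit]
      exact mul_le_mul hprod_sB hprod_sA (pow_nonneg hr0.le _) hprodB_pos.le
    have hr_pow : r^(h+1) ≤ P * F2'^k := by
      rw [inv_mul_le_iff₀ hF2'k] at hmain
      linarith [hmain]
    have : r ≤ r^(h+1) := le_self_pow₀ hr1.le (by omega)
    exact le_trans (le_trans this hr_pow) (le_max_right _ _)
  -- STEP 2 : bound all the roots
  set sS := Finset.filter (fun i : Fin (h+k) => (i:ℕ) < k+n+1) Finset.univ with hsS_def
  set sL := Finset.filter (fun i : Fin (h+k) => ¬((i:ℕ) < k+n+1)) Finset.univ with hsL_def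
  set A1 := ∏ i ∈ sS, (X - C (α i)) with hA1_def
  set B1 := ∏ i ∈ sL, (X - C (α i)) with hB1_def
  have hsplit1 : A1 * B1 = p :=
    Finset.prod_filter_mul_prod_filter_not Finset.univ _ _
  have hcardS : sS.card = k+n+1 := card_filter_fin_lt _ _ (by omega)
  have hcardL : sL.card = h-n-1 := by
    have h0 := Finset.card_filter_add_card_filter_not
      (s := (Finset.univ : Finset (Fin (h+k)))) (p := fun i : Fin (h+k) => (i:ℕ) < k+n+1)
    rw [hcard_univ, ← hsS_def, ← hsL_def] at h0
    rw [hcardS] at h0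
    omega
  have hA1monic : A1.Monic := monic_prod_of_monic _ _ fun i _ => monic_X_sub_C _
  have hB1monic : B1.Monic := monic_prod_of_monic _ _ fun i _ => monic_X_sub_C _
  have hA1deg : A1.natDegree = k+n+1 := by rw [hA1_def, natDegree_prod_X_sub_C, hcardS]
  have hB1deg : B1.natDegree = h-n-1 := by rw [hB1_def, natDegree_prod_X_sub_C, hcardL]
  have hA1coeff : ∀ t, Complex.abs (A1.coeff t) ≤ CA1 := by
    intro t
    refine le_trans (coeff_prod_bound sS _ t) ?_
    calc ∏ i ∈ sS, (1 + Complex.abs (α i)) ≤ ∏ _i ∈ sS, (1 + Rmax) := by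
          refine Finset.prod_le_prod (fun i _ => by positivity) ?_
          intro i hi
          have h1' : (i:ℕ) ≤ k + n := by
            have := (Finset.mem_filter.mp hi).2
            omega
          have := le_trans (hbelow i h1') hrR
          linarith
      _ = (1+Rmax)^sS.card := by rw [Finset.prod_const]
      _ ≤ CA1 := by
          rw [hCA1_def]
          apply pow_le_pow_right₀ (by linarith)
          omega
  have hD1' : ∀ s ≤ B1.natDegree,
      Complex.abs ((A1*B1).coeff (A1.natDegree + B1.natDegree - s)) ≤ D1 := by
    intro s hs
    rw [hB1deg] at hs
    have hidx : A1.natDegree + B1.natDegree - s = h + k - s := by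
      rw [hA1deg, hB1deg]; omega
    rw [hidx, hsplit1, hpout (h+k-s) (by omega) (by omega), map_div₀, hD1_def]
    gcongr
    exact hDc (h+k-s) (by omega)
  have hB1bound : ∀ t, Complex.abs (B1.coeff t) ≤ F1^(h+k) := by
    intro t
    by_cases ht : t ≤ B1.natDegree
    · have hbd := coeff_bound_of_prod A1 B1 hA1monic hB1monic CA1 D1 hA1coeff hD1_0 hD1'
        (B1.natDegree - t) (by omega)
      rw [show B1.natDegree - (B1.natDegree - t) = t by omega] at hbd
      have hFeq1 : D1 + ((A1.natDegree:ℝ) + (B1.natDegree:ℝ) + 1) * CA1 + 1 = F1 := by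
        rw [hA1deg, hB1deg, hF1_def]
        push_cast [Nat.cast_sub (show (1:ℕ) ≤ h - n by omega), Nat.cast_sub (show n ≤ h by omega)]
        ring
      rw [hFeq1] at hbd
      refine le_trans hbd ?_
      apply pow_le_pow_right₀ hF1_1
      omega
    · rw [coeff_eq_zero_of_natDegree_lt (by omega)]
      simpa using hF1hk0
  by_cases hi₀ : (i₀:ℕ) ≤ k + n
  · have := le_trans (hbelow i₀ hi₀) hrR
    have h1 : (0:ℝ) ≤ 1 + F1^(h+k) := by linarith
    linarith
  · have hmem : i₀ ∈ sL := Finset.mem_filter.mpr ⟨Finset.mem_univ _, by omega⟩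
    have hev : B1.eval (α i₀) = 0 := by
      rw [hB1_def, eval_prod]
      exact Finset.prod_eq_zero hmem (by simp)
    have := root_bound B1 hB1monic (F1^(h+k)) hF1hk0 hB1bound (α i₀) hev
    linarith


end Stmt8Aux

theorem stmt8 (k h n : ℕ) (hk : 1 ≤ k) (hh : 1 ≤ h) (hn : n < h) (c : ℤ → ℂ)
    (hch : c (h : ℤ) ≠ 0) (hck : c (-(k : ℤ)) ≠ 0)
    (hc : ∀ i : ℤ, (i < -(k : ℤ) ∨ (h : ℤ) < i) → c i = 0) :
    IsCompact (CA k h n c) := by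
  rw [Stmt8Aux.CA_eq k h n hk hn c hch]
  obtain ⟨M, hM⟩ := Stmt8Aux.Sset_bounded k h n hk hh hn c hch hck
  have hScomp : IsCompact (Stmt8Aux.Sset k h n c) := by
    rw [Metric.isCompact_iff_isClosed_bounded]
    refine ⟨Stmt8Aux.Sset_isClosed k h n c, ?_⟩
    rw [isBounded_iff_forall_norm_le]
    refine ⟨max M 0, fun α hα => ?_⟩
    rw [pi_norm_le_iff_of_nonneg (le_max_right M 0)]
    intro i
    calc ‖α i‖ = Complex.abs (α i) := Complex.norm_eq_abs _
      _ ≤ M := hM α hα i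
      _ ≤ max M 0 := le_max_left M 0
  exact hScomp.image (Stmt8Aux.fmap_continuous k h n c)
end

section
/- Let N ≥ 1 and 0 ≤ b < N be integers. Suppose (α^{(m)})_{m≥1} is a sequence of N-tuples of complex numbers with |α^{(m)}_1| ≤ |α^{(m)}_2| ≤ … ≤ |α^{(m)}_N| for every m, such that there exists M > 0 with |α^{(m)}_j| ≤ M for all m and all j ≤ b, while |α^{(m)}_{b+1}| → ∞ as m → ∞. Then |e_{N−b}(α^{(m)}_1,…,α^{(m)}_N)| → ∞ as m → ∞, where e_{N−b} is the (N−b)-th elementary symmetric polynomial in N variables. In particular, if the value e_{N−b}(α^{(m)}) is a fixed constant independent of m, no such divergence of roots is possible. -/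
open Filter

theorem stmt11 (N b : ℕ) (hN : 1 ≤ N) (hb : b < N) (α : ℕ → Fin N → ℂ)
    (hord : ∀ m : ℕ, ∀ j l : Fin N, j ≤ l → ‖α m j‖ ≤ ‖α m l‖)
    (M : ℝ) (hM : 0 < M)
    (hbdd : ∀ m : ℕ, ∀ j : Fin N, (j : ℕ) < b → ‖α m j‖ ≤ M)
    (hdiv : Tendsto (fun m => ‖α m ⟨b, hb⟩‖) atTop atTop) :
    Tendsto
      (fun m =>
        ‖(Multiset.map (α m) (Finset.univ : Finset (Fin N)).val).esymm (N - b)‖)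
      atTop atTop := by
  classical
  set k := N - b with hk
  set bb : Fin N := ⟨b, hb⟩ with hbb
  set T : Finset (Fin N) := Finset.Ici bb with hT
  have hTcard : T.card = k := by rw [hT, Fin.card_Ici]
  set T' : Finset (Fin N) := Finset.Ioi bb with hT'
  set Q : ℕ → ℝ := fun m => ∏ i ∈ T', ‖α m i‖ with hQ
  set C : ℝ := (Nat.choose N k : ℝ) with hC
  have habs : ∀ m (s : Finset (Fin N)), 0 ≤ ∏ i ∈ s, ‖α m i‖ := by
    intro m s
    exact Finset.prod_nonneg fun i _ => norm_nonneg _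
  -- bound on non-top terms
  have hterm : ∀ m, ∀ t ∈ Finset.powersetCard k (Finset.univ : Finset (Fin N)),
      t ≠ T → (∏ i ∈ t, ‖α m i‖) ≤ M * Q m := by
    intro m t ht hne
    rw [Finset.mem_powersetCard] at ht
    obtain ⟨-, htc⟩ := ht
    have hsub : ¬ t ⊆ T := fun hsub =>
      hne (Finset.eq_of_subset_of_card_le hsub (by rw [hTcard, htc]))
    obtain ⟨j, hjt, hjT⟩ := Finset.not_subset.1 hsub
    have hjb : (j : ℕ) < b := by
      by_contra h
      have h0 : (bb : ℕ) = b := rfl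
      exact hjT (Finset.mem_Ici.2 (Fin.le_def.2 (by omega)))
    have hjM : ‖α m j‖ ≤ M := hbdd m j hjb
    rw [← Finset.prod_erase_mul _ _ hjt, mul_comm]
    set S' : Finset (Fin N) := t.erase j with hS'
    have key : (∏ i ∈ S', ‖α m i‖) ≤ Q m := by
      have hS'card : S'.card = k - 1 := by
        rw [hS', Finset.card_erase_of_mem hjt, htc]
      have hT'card : T'.card = k - 1 := by
        have h0 : (bb : ℕ) = b := rfl
        rw [hT', Fin.card_Ioi]
        omega
      have hccard : (S' \ T').card = (T' \ S').card := by
        have h1 := Finset.card_inter_add_card_sdiff S' T'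
        have h2 := Finset.card_inter_add_card_sdiff T' S'
        rw [Finset.inter_comm] at h2
        omega
      have h1 : (∏ i ∈ S' \ T', ‖α m i‖) ≤
          ‖α m bb‖ ^ (S' \ T').card := by
        rw [← Finset.prod_const]
        refine Finset.prod_le_prod (fun i _ => norm_nonneg _) fun i hi => ?_
        refine hord m i bb (le_of_not_gt fun h => ?_)
        exact (Finset.mem_sdiff.1 hi).2 (Finset.mem_Ioi.2 h)
      have h2 : ‖α m bb‖ ^ (T' \ S').card ≤
          ∏ i ∈ T' \ S', ‖α m i‖ := by
        rw [← Finset.prod_const]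
        refine Finset.prod_le_prod (fun i _ => norm_nonneg _) fun i hi =>
          hord m bb i (le_of_lt (Finset.mem_Ioi.1 (Finset.mem_sdiff.1 hi).1))
      calc (∏ i ∈ S', ‖α m i‖)
          = (∏ i ∈ S' ∩ T', ‖α m i‖) * ∏ i ∈ S' \ T', ‖α m i‖ :=
            (Finset.prod_inter_mul_prod_diff S' T' _).symm
        _ ≤ (∏ i ∈ S' ∩ T', ‖α m i‖) * ∏ i ∈ T' \ S', ‖α m i‖ := by
            refine mul_le_mul_of_nonneg_left ?_ (habs m _)
            calc (∏ i ∈ S' \ T', ‖α m i‖)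
                ≤ ‖α m bb‖ ^ (S' \ T').card := h1
              _ = ‖α m bb‖ ^ (T' \ S').card := by rw [hccard]
              _ ≤ ∏ i ∈ T' \ S', ‖α m i‖ := h2
        _ = (∏ i ∈ T' ∩ S', ‖α m i‖) * ∏ i ∈ T' \ S', ‖α m i‖ := by
            rw [Finset.inter_comm]
        _ = Q m := Finset.prod_inter_mul_prod_diff T' S' _
    exact mul_le_mul hjM key (habs m _) (le_of_lt hM)
  -- main lower bound
  have hmain : ∀ m, 1 ≤ ‖α m bb‖ → C * M ≤ ‖α m bb‖ →
      ‖α m bb‖ - C * M ≤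
      ‖(Multiset.map (α m) (Finset.univ : Finset (Fin N)).val).esymm k‖ := by
    intro m h1 h2
    rw [Finset.esymm_map_val]
    have hTmem : T ∈ Finset.powersetCard k (Finset.univ : Finset (Fin N)) :=
      Finset.mem_powersetCard.2 ⟨Finset.subset_univ _, hTcard⟩
    rw [← Finset.add_sum_erase _ _ hTmem]
    have hTprod : ‖∏ i ∈ T, α m i‖ = ‖α m bb‖ * Q m := by
      rw [norm_prod, hT, ← Finset.Ioi_insert, Finset.prod_insert Finset.notMem_Ioi_self]
    have hQ1 : 1 ≤ Q m := by
      calc (1:ℝ) = ∏ _i ∈ T', 1 := (Finset.prod_const_one).symm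
        _ ≤ Q m := Finset.prod_le_prod (by simp) fun i hi =>
            le_trans h1 (hord m bb i (le_of_lt (Finset.mem_Ioi.1 hi)))
    have hrest : ‖∑ t ∈ (Finset.powersetCard k
          (Finset.univ : Finset (Fin N))).erase T, ∏ i ∈ t, α m i‖ ≤ C * M * Q m := by
      calc ‖∑ t ∈ (Finset.powersetCard k
              (Finset.univ : Finset (Fin N))).erase T, ∏ i ∈ t, α m i‖
          ≤ ∑ t ∈ (Finset.powersetCard k (Finset.univ : Finset (Fin N))).erase T,
              ‖∏ i ∈ t, α m i‖ := norm_sum_le _ _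
        _ ≤ ∑ t ∈ (Finset.powersetCard k (Finset.univ : Finset (Fin N))).erase T,
              (M * Q m) := by
            refine Finset.sum_le_sum fun t ht => ?_
            rw [norm_prod]
            exact hterm m t (Finset.mem_of_mem_erase ht) (Finset.ne_of_mem_erase ht)
        _ = ((Finset.powersetCard k (Finset.univ : Finset (Fin N))).erase T).card *
              (M * Q m) := by rw [Finset.sum_const, nsmul_eq_mul]
        _ ≤ C * (M * Q m) := by
            refine mul_le_mul_of_nonneg_right ?_
              (mul_nonneg (le_of_lt hM) (le_trans zero_le_one hQ1))
            rw [hC]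
            have : ((Finset.powersetCard k (Finset.univ : Finset (Fin N))).erase T).card ≤
                (Finset.powersetCard k (Finset.univ : Finset (Fin N))).card :=
              Finset.card_le_card (Finset.erase_subset _ _)
            rw [Finset.card_powersetCard, Finset.card_univ, Fintype.card_fin] at this
            exact_mod_cast this
        _ = C * M * Q m := by ring
    set A := ∏ i ∈ T, α m i
    set B := ∑ t ∈ (Finset.powersetCard k (Finset.univ : Finset (Fin N))).erase T,
        ∏ i ∈ t, α m i
    have htri : ‖A‖ - ‖B‖ ≤ ‖A + B‖ := by
      have := norm_add_le (A + B) (-B)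
      simp only [add_neg_cancel_right, norm_neg] at this
      linarith
    have : (‖α m bb‖ - C * M) * Q m ≤ ‖A + B‖ := by
      refine le_trans ?_ htri
      rw [hTprod]
      nlinarith
    refine le_trans ?_ this
    nlinarith
  have hev : ∀ᶠ m in atTop, ‖α m bb‖ - C * M ≤
      ‖(Multiset.map (α m) (Finset.univ : Finset (Fin N)).val).esymm k‖ := by
    filter_upwards [hdiv.eventually_ge_atTop 1, hdiv.eventually_ge_atTop (C * M)] with m h1 h2
    exact hmain m h1 h2
  exact tendsto_atTop_mono' atTop hev (tendsto_atTop_add_const_right _ _ hdiv)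
end
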